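/- Let 0 < τ₂ < τ₁ be reals, let x be a real number, let k ≥ 1 and let r₁, …, r_k be natural numbers. Set m_j = r_j + r_{j+1} + ⋯ + r_k and s_j = r₁ + ⋯ + r_j. Writing M_σ for the deformed multinomial coefficient formed from the pair σ = (τ₁^{−1}, τ₂^{−1}), one has M_σ(x; r₁,…,r_k) = (τ₁τ₂)^{−Σ_{j=1}^{k} r_j(x − m_j)} · M(x; r₁,…,r_k), and moreover Σ_{j=1}^{k} r_j(x − m_j) = Σ_{j=1}^{k} r_j(x − s_j), so the same identity holds with s_j in place of m_j. -/
import Mathlib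

open Finset

noncomputable def dnum (τ₁ τ₂ x : ℝ) : ℝ := (τ₁ ^ x - τ₂ ^ x) / (τ₁ - τ₂)

noncomputable def dfac (τ₁ τ₂ : ℝ) (r : ℕ) : ℝ :=
  ∏ j ∈ Finset.range r, dnum τ₁ τ₂ ((j : ℝ) + 1)

noncomputable def dfall (τ₁ τ₂ x : ℝ) (r : ℕ) : ℝ :=
  ∏ i ∈ Finset.range r, dnum τ₁ τ₂ (x - (i : ℝ))

noncomputable def dbinom (τ₁ τ₂ x : ℝ) (r : ℕ) : ℝ := dfall τ₁ τ₂ x r / dfac τ₁ τ₂ r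

noncomputable def dmulti (τ₁ τ₂ x : ℝ) {k : ℕ} (r : Fin k → ℕ) : ℝ :=
  dfall τ₁ τ₂ x (∑ j, r j) / ∏ j, dfac τ₁ τ₂ (r j)

lemma dnum_inv (τ₁ τ₂ : ℝ) (hτ₂ : 0 < τ₂) (hττ : τ₂ < τ₁) (y : ℝ) :
    dnum τ₁⁻¹ τ₂⁻¹ y = (τ₁ * τ₂) ^ (1 - y) * dnum τ₁ τ₂ y := by
  have hτ₁ : 0 < τ₁ := hτ₂.trans hττ
  have hP : 0 < τ₁ * τ₂ := mul_pos hτ₁ hτ₂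
  have h1 : (0:ℝ) < τ₁ ^ y := Real.rpow_pos_of_pos hτ₁ y
  have h2 : (0:ℝ) < τ₂ ^ y := Real.rpow_pos_of_pos hτ₂ y
  have hne : τ₁ - τ₂ ≠ 0 := sub_ne_zero.mpr (ne_of_gt hττ)
  have hne' : τ₁⁻¹ - τ₂⁻¹ ≠ 0 :=
    sub_ne_zero.mpr fun h => (ne_of_gt hττ) (inv_injective h)
  unfold dnum
  rw [Real.inv_rpow hτ₁.le, Real.inv_rpow hτ₂.le, Real.rpow_sub hP, Real.rpow_one,
    Real.mul_rpow hτ₁.le hτ₂.le, inv_sub_inv h1.ne' h2.ne', inv_sub_inv hτ₁.ne' hτ₂.ne',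
    div_div_div_eq, div_mul_div_comm]
  rw [div_eq_div_iff (mul_ne_zero (mul_ne_zero h1.ne' h2.ne') (sub_ne_zero.mpr hττ.ne))
    (mul_ne_zero (mul_ne_zero h1.ne' h2.ne') (sub_ne_zero.mpr hττ.ne'))]
  ring

lemma gaussR (n : ℕ) : (∑ i ∈ Finset.range n, (i : ℝ)) * 2 = n * n - n := by
  induction n with
  | zero => simp
  | succ m ih => rw [Finset.sum_range_succ]; push_cast; push_cast at ih; linarith

lemma dfall_inv (τ₁ τ₂ : ℝ) (hτ₂ : 0 < τ₂) (hττ : τ₂ < τ₁) (x : ℝ) (n : ℕ) :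
    dfall τ₁⁻¹ τ₂⁻¹ x n =
      (τ₁ * τ₂) ^ (∑ i ∈ Finset.range n, (1 - (x - (i : ℝ)))) * dfall τ₁ τ₂ x n := by
  have hP : 0 < τ₁ * τ₂ := mul_pos (hτ₂.trans hττ) hτ₂
  unfold dfall
  rw [Real.rpow_sum_of_pos hP, ← Finset.prod_mul_distrib]
  exact Finset.prod_congr rfl fun i _ => dnum_inv τ₁ τ₂ hτ₂ hττ _

lemma dfac_inv (τ₁ τ₂ : ℝ) (hτ₂ : 0 < τ₂) (hττ : τ₂ < τ₁) (n : ℕ) :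
    dfac τ₁⁻¹ τ₂⁻¹ n =
      (τ₁ * τ₂) ^ (∑ i ∈ Finset.range n, (-(i : ℝ))) * dfac τ₁ τ₂ n := by
  have hP : 0 < τ₁ * τ₂ := mul_pos (hτ₂.trans hττ) hτ₂
  unfold dfac
  rw [Real.rpow_sum_of_pos hP, ← Finset.prod_mul_distrib]
  refine Finset.prod_congr rfl fun i _ => ?_
  rw [dnum_inv τ₁ τ₂ hτ₂ hττ]
  congr 1
  ring_nf

lemma dfac_pos (τ₁ τ₂ : ℝ) (hτ₂ : 0 < τ₂) (hττ : τ₂ < τ₁) (n : ℕ) :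
    0 < dfac τ₁ τ₂ n := by
  refine Finset.prod_pos fun i _ => ?_
  have h : τ₂ ^ ((i : ℝ) + 1) < τ₁ ^ ((i : ℝ) + 1) :=
    Real.rpow_lt_rpow hτ₂.le hττ (by positivity)
  exact div_pos (by linarith) (by linarith)

/-- Inversion formula for the deformed multinomial coefficients:
`M_{(τ₁⁻¹,τ₂⁻¹)}(x; r₁,…,r_k) = (τ₁τ₂)^{−Σ_j r_j(x−m_j)} M(x; r₁,…,r_k)`,
the exponent sums with `m_j = r_j+⋯+r_k` and with `s_j = r₁+⋯+r_j` agree,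
and hence the same identity holds with `s_j` in place of `m_j`. -/
theorem deformed_multinomial_inverse_parameters
    (τ₁ τ₂ : ℝ) (hτ₂ : 0 < τ₂) (hττ : τ₂ < τ₁) (x : ℝ)
    (k : ℕ) (hk : 1 ≤ k) (r : Fin k → ℕ) :
    dmulti τ₁⁻¹ τ₂⁻¹ x r =
        (τ₁ * τ₂) ^ (-(∑ j : Fin k, (r j : ℝ) *
              (x - ((∑ i ∈ Finset.Ici j, r i : ℕ) : ℝ)))) * dmulti τ₁ τ₂ x r ∧
      (∑ j : Fin k, (r j : ℝ) * (x - ((∑ i ∈ Finset.Ici j, r i : ℕ) : ℝ))) =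
        (∑ j : Fin k, (r j : ℝ) * (x - ((∑ i ∈ Finset.Iic j, r i : ℕ) : ℝ))) ∧
      dmulti τ₁⁻¹ τ₂⁻¹ x r =
        (τ₁ * τ₂) ^ (-(∑ j : Fin k, (r j : ℝ) *
              (x - ((∑ i ∈ Finset.Iic j, r i : ℕ) : ℝ)))) * dmulti τ₁ τ₂ x r := by
  have hτ₁ : 0 < τ₁ := hτ₂.trans hττ
  have hP : 0 < τ₁ * τ₂ := mul_pos hτ₁ hτ₂
  set S : ℕ := ∑ j, r j with hS
  -- the m/s swap identity at the ℕ level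
  have hswapN : (∑ j : Fin k, r j * ∑ i ∈ Finset.Ici j, r i) =
      (∑ j : Fin k, r j * ∑ i ∈ Finset.Iic j, r i) := by
    simp_rw [Finset.mul_sum]
    rw [Finset.sum_comm' (t' := Finset.univ) (s' := fun i => Finset.Iic i)
      (by intro a b; simp)]
    exact Finset.sum_congr rfl fun i _ =>
      Finset.sum_congr rfl fun j _ => mul_comm _ _
  have hswap : (∑ j : Fin k, (r j : ℝ) * ((∑ i ∈ Finset.Ici j, r i : ℕ) : ℝ)) =
      (∑ j : Fin k, (r j : ℝ) * ((∑ i ∈ Finset.Iic j, r i : ℕ) : ℝ)) := by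
    exact_mod_cast congrArg (Nat.cast : ℕ → ℝ) hswapN
  -- pointwise: m_j + s_j = S + r j
  have hms : ∀ j : Fin k, (∑ i ∈ Finset.Ici j, r i) + (∑ i ∈ Finset.Iic j, r i)
      = S + r j := by
    intro j
    have hu : Finset.Ici j ∪ Finset.Iic j = Finset.univ := by
      ext i; simp [le_total j i]
    have hi : Finset.Ici j ∩ Finset.Iic j = {j} := by
      ext i; simp [Finset.mem_inter, eq_comm (a := i) (b := j), le_antisymm_iff, and_comm]
    have := Finset.sum_union_inter (s₁ := Finset.Ici j) (s₂ := Finset.Iic j) (f := r)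
    rw [hu, hi] at this
    simpa [hS] using this.symm
  set A : ℝ := ∑ j : Fin k, (r j : ℝ) * ((∑ i ∈ Finset.Ici j, r i : ℕ) : ℝ) with hA
  have hSr : (∑ j : Fin k, (r j : ℝ)) = (S : ℝ) := by push_cast [hS]; rfl
  have h2A : 2 * A = (S : ℝ) * S + ∑ j, (r j : ℝ) * (r j) := by
    have : A + A = ∑ j : Fin k, (r j : ℝ) * ((S : ℝ) + r j) := by
      nth_rewrite 2 [hA]
      rw [hswap, ← Finset.sum_add_distrib]
      refine Finset.sum_congr rfl fun j _ => ?_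
      have h : ((∑ i ∈ Finset.Ici j, r i : ℕ) : ℝ) + ((∑ i ∈ Finset.Iic j, r i : ℕ) : ℝ)
          = (S : ℝ) + (r j : ℝ) := by exact_mod_cast hms j
      linear_combination (r j : ℝ) * h
    simp_rw [mul_add] at this
    rw [Finset.sum_add_distrib, ← Finset.sum_mul, hSr] at this
    linarith
  -- the inversion with exponent written as a single real number
  have key : ∀ E : ℝ, E = -(∑ j : Fin k, (r j : ℝ) *
      (x - ((∑ i ∈ Finset.Ici j, r i : ℕ) : ℝ))) →
      dmulti τ₁⁻¹ τ₂⁻¹ x r = (τ₁ * τ₂) ^ E * dmulti τ₁ τ₂ x r := by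
    rintro E rfl
    unfold dmulti
    rw [dfall_inv τ₁ τ₂ hτ₂ hττ, show (∏ j, dfac τ₁⁻¹ τ₂⁻¹ (r j)) =
        (τ₁ * τ₂) ^ (∑ j, ∑ i ∈ Finset.range (r j), (-(i:ℝ))) * ∏ j, dfac τ₁ τ₂ (r j) by
      rw [Real.rpow_sum_of_pos hP, ← Finset.prod_mul_distrib]
      exact Finset.prod_congr rfl fun j _ => dfac_inv τ₁ τ₂ hτ₂ hττ _]
    rw [mul_div_mul_comm, ← Real.rpow_sub hP]
    congr 1
    -- exponent computation
    have hE : ∑ i ∈ Finset.range S, (1 - (x - (i:ℝ)))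
        = (S:ℝ) - S * x + ((S:ℝ) * S - S) / 2 := by
      have h := gaussR S
      have : ∑ i ∈ Finset.range S, (1 - (x - (i:ℝ)))
          = ∑ i ∈ Finset.range S, ((1 - x) + (i:ℝ)) :=
        Finset.sum_congr rfl fun i _ => by ring
      rw [this, Finset.sum_add_distrib, Finset.sum_const, Finset.card_range,
        nsmul_eq_mul]
      linarith
    have hF : (∑ j, ∑ i ∈ Finset.range (r j), (-(i:ℝ)))
        = ∑ j, ((r j : ℝ) - (r j : ℝ) * (r j)) / 2 := by
      refine Finset.sum_congr rfl fun j _ => ?_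
      have h := gaussR (r j)
      rw [Finset.sum_neg_distrib]
      linarith
    rw [hE, hF]
    have hQ : (∑ j, ((r j : ℝ) - (r j : ℝ) * (r j)) / 2)
        = ((S:ℝ) - ∑ j, (r j : ℝ) * (r j)) / 2 := by
      rw [← hSr, ← Finset.sum_sub_distrib, Finset.sum_div]
    have hRHS : -(∑ j : Fin k, (r j : ℝ) * (x - ((∑ i ∈ Finset.Ici j, r i : ℕ) : ℝ)))
        = -((S:ℝ) * x - A) := by
      simp_rw [mul_sub]
      rw [Finset.sum_sub_distrib, ← Finset.sum_mul, hSr, ← hA]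
    rw [hRHS, hQ]
    congr 1
    linarith
  have hmid : (∑ j : Fin k, (r j : ℝ) * (x - ((∑ i ∈ Finset.Ici j, r i : ℕ) : ℝ))) =
      (∑ j : Fin k, (r j : ℝ) * (x - ((∑ i ∈ Finset.Iic j, r i : ℕ) : ℝ))) := by
    simp_rw [mul_sub]
    rw [Finset.sum_sub_distrib, Finset.sum_sub_distrib, ← hA, hswap]
  exact ⟨key _ rfl, hmid, key _ (by rw [hmid])⟩
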